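/- Under the same setup, m₁ defined by m₁(r) = r^{-3}∫₀^r x² m₂(x) dx (m₁(0)=0) is twice differentiable at 0 with m₁''(0) = m₂''(0)/5. -/

import Mathlib

set_option maxHeartbeats 1000000


open Set intervalIntegral Filter MeasureTheory

private lemma helper_slope (b L K₁ K₂ : ℝ) (hb : 0 < b) (f : ℝ → ℝ)
    (h : ∀ r ∈ Ioo (0:ℝ) b, |(f r - f 0) / r - L| ≤ K₁ * r + K₂ * r ^ 2) :
    HasDerivWithinAt f L (Icc 0 b) 0 := by
  rw [hasDerivWithinAt_iff_tendsto_slope, Icc_diff_left]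
  rw [← tendsto_sub_nhds_zero_iff]
  apply squeeze_zero_norm' (a := fun r => K₁ * r + K₂ * r ^ 2)
  · filter_upwards [self_mem_nhdsWithin,
      eventually_nhdsWithin_of_eventually_nhds (eventually_lt_nhds hb)] with r hr hrb
    rw [Real.norm_eq_abs, slope_def_field]
    simpa using h r ⟨hr.1, hrb⟩
  · have hc : Continuous (fun r : ℝ => K₁ * r + K₂ * r ^ 2) := by continuity
    have := hc.tendsto 0
    simp only [mul_zero, zero_pow, add_zero, ne_eq, OfNat.ofNat_ne_zero,
      not_false_eq_true] at this
    exact this.mono_left nhdsWithin_le_nhds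

/-- Under the same setup, `m₁` is twice differentiable at `0`
with `m₁''(0) = m₂''(0)/5`. -/
theorem stmt1 (b : ℝ) (hb : 0 < b) (m₁ m₂ : ℝ → ℝ)
    (hm₂ : ContDiffOn ℝ 3 m₂ (Icc 0 b)) (hm₂0 : m₂ 0 = 0)
    (hm₁ : ∀ r ∈ Ioc 0 b, m₁ r = r⁻¹ ^ 3 * ∫ x in (0:ℝ)..r, x ^ 2 * m₂ x)
    (hm₁0 : m₁ 0 = 0) :
    DifferentiableWithinAt ℝ m₁ (Icc 0 b) 0 ∧
    DifferentiableWithinAt ℝ (derivWithin m₁ (Icc 0 b)) (Icc 0 b) 0 ∧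
    iteratedDerivWithin 2 m₁ (Icc 0 b) 0 = iteratedDerivWithin 2 m₂ (Icc 0 b) 0 / 5 := by
  have huniq : UniqueDiffOn ℝ (Icc (0:ℝ) b) := uniqueDiffOn_Icc hb
  have h0mem : (0:ℝ) ∈ Icc (0:ℝ) b := left_mem_Icc.2 hb.le
  set a : ℝ := derivWithin m₂ (Icc 0 b) 0 with ha
  set c : ℝ := iteratedDerivWithin 2 m₂ (Icc 0 b) 0 with hc
  set I : ℝ → ℝ := fun r => ∫ x in (0:ℝ)..r, x ^ 2 * m₂ x with hIdef
  -- Taylor bound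
  obtain ⟨K, hK, hTay⟩ : ∃ K, 0 ≤ K ∧ ∀ x ∈ Icc (0:ℝ) b,
      |m₂ x - (a * x + c / 2 * x ^ 2)| ≤ K * x ^ 3 := by
    obtain ⟨C, hC⟩ := exists_taylor_mean_remainder_bound (n := 2) hb.le (by exact_mod_cast hm₂)
    refine ⟨|C|, abs_nonneg _, fun x hx => ?_⟩
    have h := hC x hx
    rw [taylor_within_apply] at h
    simp only [Finset.sum_range_succ, Finset.sum_range_zero, iteratedDerivWithin_zero,
      iteratedDerivWithin_one, hm₂0,
      sub_zero, smul_eq_mul, Real.norm_eq_abs] at h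
    have hx0 : (0:ℝ) ≤ x := hx.1
    calc |m₂ x - (a * x + c / 2 * x ^ 2)|
        = |m₂ x - (0 + (↑(Nat.factorial 0):ℝ)⁻¹ * x ^ 0 * 0
            + (↑(Nat.factorial 1):ℝ)⁻¹ * x ^ 1 * a
            + (↑(Nat.factorial 2):ℝ)⁻¹ * x ^ 2 * c)| := by
          norm_num [Nat.factorial]; ring_nf
      _ ≤ C * x ^ (2+1) := h
      _ ≤ |C| * x ^ 3 :=
          mul_le_mul_of_nonneg_right (le_abs_self C) (by positivity)
  -- continuity of the integrand
  have hφc : ContinuousOn (fun x => x ^ 2 * m₂ x) (Icc 0 b) :=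
    (continuous_pow 2).continuousOn.mul hm₂.continuousOn
  -- Bound on the integral
  have hIbound : ∀ r ∈ Ioc (0:ℝ) b,
      |I r - (a / 4 * r ^ 4 + c / 10 * r ^ 5)| ≤ K * r ^ 6 := by
    intro r hr
    have hr0 : (0:ℝ) < r := hr.1
    have hInt : IntervalIntegrable (fun x => x ^ 2 * m₂ x) volume 0 r :=
      (hφc.mono (by rw [uIcc_of_le hr0.le]; exact Icc_subset_Icc_right hr.2)).intervalIntegrable
    have hIntP : IntervalIntegrable (fun x => a * x ^ 3 + c / 2 * x ^ 4) volume 0 r :=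
      (Continuous.intervalIntegrable (by continuity) _ _)
    have hpoly : (∫ x in (0:ℝ)..r, (a * x ^ 3 + c / 2 * x ^ 4))
        = a / 4 * r ^ 4 + c / 10 * r ^ 5 := by
      rw [intervalIntegral.integral_add ((Continuous.intervalIntegrable (by continuity) _ _))
        ((Continuous.intervalIntegrable (by continuity) _ _)),
        intervalIntegral.integral_const_mul, intervalIntegral.integral_const_mul,
        integral_pow, integral_pow]
      norm_num; ring
    have hsplit : I r - (a / 4 * r ^ 4 + c / 10 * r ^ 5)
        = ∫ x in (0:ℝ)..r, (x ^ 2 * m₂ x - (a * x ^ 3 + c / 2 * x ^ 4)) := by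
      rw [intervalIntegral.integral_sub hInt hIntP, hpoly]
    rw [hsplit]
    have hb1 : ∀ x ∈ uIoc (0:ℝ) r, ‖x ^ 2 * m₂ x - (a * x ^ 3 + c / 2 * x ^ 4)‖ ≤ K * r ^ 5 := by
      intro x hx
      rw [uIoc_of_le hr0.le] at hx
      have hx0 : 0 < x := hx.1
      have hxr : x ≤ r := hx.2
      have h1 : |m₂ x - (a * x + c / 2 * x ^ 2)| ≤ K * x ^ 3 :=
        hTay x ⟨hx0.le, hxr.trans hr.2⟩
      have heq : x ^ 2 * m₂ x - (a * x ^ 3 + c / 2 * x ^ 4)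
          = x ^ 2 * (m₂ x - (a * x + c / 2 * x ^ 2)) := by ring
      rw [Real.norm_eq_abs, heq, abs_mul, abs_of_nonneg (by positivity : (0:ℝ) ≤ x ^ 2)]
      calc x ^ 2 * |m₂ x - (a * x + c / 2 * x ^ 2)| ≤ x ^ 2 * (K * x ^ 3) :=
            mul_le_mul_of_nonneg_left h1 (by positivity)
        _ = K * x ^ 5 := by ring
        _ ≤ K * r ^ 5 := mul_le_mul_of_nonneg_left (pow_le_pow_left₀ hx0.le hxr 5) hK
    calc |∫ x in (0:ℝ)..r, (x ^ 2 * m₂ x - (a * x ^ 3 + c / 2 * x ^ 4))|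
        ≤ K * r ^ 5 * |r - 0| := intervalIntegral.norm_integral_le_of_norm_le_const hb1
      _ = K * r ^ 6 := by rw [sub_zero, abs_of_nonneg hr0.le]; ring
  -- derivative of m₁ at interior points
  have hDeq : ∀ r ∈ Ioo (0:ℝ) b, derivWithin m₁ (Icc 0 b) r
      = -3 * r⁻¹ ^ 4 * I r + r⁻¹ * m₂ r := by
    intro r hr
    have hr0 : (0:ℝ) < r := hr.1
    have hrne : r ≠ 0 := hr0.ne'
    have hInt : IntervalIntegrable (fun x => x ^ 2 * m₂ x) volume 0 r :=
      (hφc.mono (by rw [uIcc_of_le hr0.le]; exact Icc_subset_Icc_right hr.2.le)).intervalIntegrable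
    have hmeas : StronglyMeasurableAtFilter (fun x => x ^ 2 * m₂ x) (nhds r) volume :=
      ⟨Ioo 0 b, Ioo_mem_nhds hr.1 hr.2,
        (hφc.mono Ioo_subset_Icc_self).aestronglyMeasurable measurableSet_Ioo⟩
    have hcontAt : ContinuousAt (fun x => x ^ 2 * m₂ x) r :=
      hφc.continuousAt (Icc_mem_nhds hr.1 hr.2)
    have hI : HasDerivAt I (r ^ 2 * m₂ r) r :=
      integral_hasDerivAt_right hInt hmeas hcontAt
    have hinv : HasDerivAt (fun u : ℝ => u⁻¹ ^ 3) (3 * r⁻¹ ^ 2 * (-(r ^ 2)⁻¹)) r :=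
      (hasDerivAt_inv hrne).pow 3 |>.congr_deriv (by push_cast; ring)
    have hg : HasDerivAt (fun u : ℝ => u⁻¹ ^ 3 * I u)
        (-3 * r⁻¹ ^ 4 * I r + r⁻¹ * m₂ r) r := by
      have : HasDerivAt (fun u : ℝ => u⁻¹ ^ 3 * I u) _ r := hinv.mul hI
      convert this using 1
      field_simp
    have hnb : Icc (0:ℝ) b ∈ nhds r := Icc_mem_nhds hr.1 hr.2
    rw [derivWithin_of_mem_nhds hnb]
    have heq : m₁ =ᶠ[nhds r] fun u => u⁻¹ ^ 3 * I u := by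
      filter_upwards [Ioo_mem_nhds hr.1 hr.2] with u hu
      exact hm₁ u ⟨hu.1, hu.2.le⟩
    rw [heq.deriv_eq]
    exact hg.deriv
  -- first derivative at 0
  have h1 : HasDerivWithinAt m₁ (a / 4) (Icc 0 b) 0 := by
    apply helper_slope b (a / 4) (|c| / 10) K hb
    intro r hr
    have hr0 : (0:ℝ) < r := hr.1
    have hE := hIbound r ⟨hr.1, hr.2.le⟩
    have heq : (m₁ r - m₁ 0) / r - a / 4
        = c / 10 * r + (I r - (a / 4 * r ^ 4 + c / 10 * r ^ 5)) / r ^ 4 := by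
      rw [hm₁ r ⟨hr.1, hr.2.le⟩, hm₁0]
      rw [show (∫ x in (0:ℝ)..r, x ^ 2 * m₂ x) = I r from rfl]
      generalize I r = v
      field_simp
      ring
    rw [heq]
    have hA : |c / 10 * r| ≤ |c| / 10 * r := by
      rw [abs_mul, abs_of_pos hr0, abs_div]
      norm_num
    have hB : |(I r - (a / 4 * r ^ 4 + c / 10 * r ^ 5)) / r ^ 4| ≤ K * r ^ 2 := by
      rw [abs_div, abs_of_pos (pow_pos hr0 4), div_le_iff₀ (pow_pos hr0 4)]
      calc |I r - (a / 4 * r ^ 4 + c / 10 * r ^ 5)| ≤ K * r ^ 6 := hE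
        _ = K * r ^ 2 * r ^ 4 := by ring
    calc |c / 10 * r + (I r - (a / 4 * r ^ 4 + c / 10 * r ^ 5)) / r ^ 4|
        ≤ |c / 10 * r| + |(I r - (a / 4 * r ^ 4 + c / 10 * r ^ 5)) / r ^ 4| := abs_add_le _ _
      _ ≤ |c| / 10 * r + K * r ^ 2 := add_le_add hA hB
  have hg0 : derivWithin m₁ (Icc 0 b) 0 = a / 4 := h1.derivWithin (huniq 0 h0mem)
  -- second derivative at 0
  have h2 : HasDerivWithinAt (derivWithin m₁ (Icc 0 b)) (c / 5) (Icc 0 b) 0 := by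
    apply helper_slope b (c / 5) (4 * K) 0 hb
    intro r hr
    have hr0 : (0:ℝ) < r := hr.1
    have hrne : r ≠ 0 := hr0.ne'
    have hE := hIbound r ⟨hr.1, hr.2.le⟩
    have hρ : |m₂ r - (a * r + c / 2 * r ^ 2)| ≤ K * r ^ 3 := hTay r ⟨hr0.le, hr.2.le⟩
    have heq : (derivWithin m₁ (Icc 0 b) r - derivWithin m₁ (Icc 0 b) 0) / r - c / 5
        = (-3) * (I r - (a / 4 * r ^ 4 + c / 10 * r ^ 5)) / r ^ 5
          + (m₂ r - (a * r + c / 2 * r ^ 2)) / r ^ 2 := by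
      rw [hDeq r hr, hg0]
      generalize I r = v
      field_simp
      ring
    rw [heq]
    have hA : |(-3) * (I r - (a / 4 * r ^ 4 + c / 10 * r ^ 5)) / r ^ 5| ≤ 3 * K * r := by
      rw [abs_div, abs_of_pos (pow_pos hr0 5), div_le_iff₀ (pow_pos hr0 5)]
      calc |(-3) * (I r - (a / 4 * r ^ 4 + c / 10 * r ^ 5))|
          = 3 * |I r - (a / 4 * r ^ 4 + c / 10 * r ^ 5)| := by
            rw [abs_mul]; norm_num
        _ ≤ 3 * (K * r ^ 6) := by linarith
        _ = 3 * K * r * r ^ 5 := by ring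
    have hB : |(m₂ r - (a * r + c / 2 * r ^ 2)) / r ^ 2| ≤ K * r := by
      rw [abs_div, abs_of_pos (pow_pos hr0 2), div_le_iff₀ (pow_pos hr0 2)]
      calc |m₂ r - (a * r + c / 2 * r ^ 2)| ≤ K * r ^ 3 := hρ
        _ = K * r * r ^ 2 := by ring
    calc |(-3) * (I r - (a / 4 * r ^ 4 + c / 10 * r ^ 5)) / r ^ 5
          + (m₂ r - (a * r + c / 2 * r ^ 2)) / r ^ 2|
        ≤ |(-3) * (I r - (a / 4 * r ^ 4 + c / 10 * r ^ 5)) / r ^ 5|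
          + |(m₂ r - (a * r + c / 2 * r ^ 2)) / r ^ 2| := abs_add_le _ _
      _ ≤ 3 * K * r + K * r := add_le_add hA hB
      _ ≤ 4 * K * r + 0 * r ^ 2 := by nlinarith
  refine ⟨h1.differentiableWithinAt, h2.differentiableWithinAt, ?_⟩
  have hit : iteratedDerivWithin 2 m₁ (Icc 0 b) 0
      = derivWithin (derivWithin m₁ (Icc 0 b)) (Icc 0 b) 0 := by
    rw [show (2:ℕ) = 1 + 1 from rfl, iteratedDerivWithin_succ]
    exact derivWithin_congr (fun x hx => congrFun iteratedDerivWithin_one x)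
      (congrFun iteratedDerivWithin_one 0)
  rw [hit, h2.derivWithin (huniq 0 h0mem)]
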